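/- Let A⁰ be a central generic arrangement of n ≥ 6 hyperplanes in ℂ³ and let T = {L₁,L₂,L₃} consist of subsets of {1,…,n} with |Lᵢ| = 4, |Lᵢ ∩ Lⱼ| = 2 for i ≠ j, and |L₁ ∪ L₂ ∪ L₃| = 6. Set H_{i,j} = ⋂_{p ∈ Lᵢ∩Lⱼ} ker f_p (a line through the origin in ℂ³). Then the span H_{1,2} + H_{1,3} + H_{2,3} has dimension 2 if and only if D_{L₁} ∩ D_{L₂} ⊆ D_{L₃}. -/

import Mathlib

noncomputable section

/-- A central generic arrangement of `n` hyperplanes in `ℂᵏ`. -/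
def CentralGeneric {n k : ℕ} (f : Fin n → ((Fin k → ℂ) →ₗ[ℂ] ℂ)) : Prop :=
  ∀ S : Finset (Fin n), S.card = k → LinearIndependent ℂ (fun i : S => f (i : Fin n))

/-- `D f S` : translations `t` for which the hyperplanes indexed by `S` have a
common point. -/
def D {n k : ℕ} (f : Fin n → ((Fin k → ℂ) →ₗ[ℂ] ℂ)) (S : Finset (Fin n)) :
    Set (Fin n → ℂ) :=
  {t | ∃ x : Fin k → ℂ, ∀ i ∈ S, f i x = t i}

/-- `H_{i,j} = ⋂_{p ∈ Lᵢ ∩ Lⱼ} ker f_p`. -/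
def Hij {n k : ℕ} (f : Fin n → ((Fin k → ℂ) →ₗ[ℂ] ℂ)) {r : ℕ}
    (L : Fin r → Finset (Fin n)) (i j : Fin r) : Submodule ℂ (Fin k → ℂ) :=
  ⨅ p ∈ L i ∩ L j, LinearMap.ker (f p)

open Module Finset

namespace ThreeDepAux

lemma sum_quad {α : Type*} [DecidableEq α] {M : Type*} [AddCommMonoid M]
    {x y z w : α} (hxy : x ≠ y) (hxz : x ≠ z) (hxw : x ≠ w) (hyz : y ≠ z)
    (hyw : y ≠ w) (hzw : z ≠ w) (g : α → M) :
    ∑ i ∈ ({x, y, z, w} : Finset α), g i = g x + g y + g z + g w := by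
  rw [Finset.sum_insert (by simp [hxy, hxz, hxw]), Finset.sum_insert (by simp [hyz, hyw]),
    Finset.sum_insert (by simp [hzw]), Finset.sum_singleton, add_assoc, add_assoc]

lemma sum_lin {n : ℕ} (a : Fin n → ℂ) (S : Finset (Fin n)) (t u v : Fin n → ℂ) (s r : ℂ) :
    ∑ i ∈ S, a i * (t i - s * u i - r * v i) =
      (∑ i ∈ S, a i * t i) - s * (∑ i ∈ S, a i * u i) - r * (∑ i ∈ S, a i * v i) := by
  rw [Finset.mul_sum, Finset.mul_sum, ← Finset.sum_sub_distrib, ← Finset.sum_sub_distrib]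
  apply Finset.sum_congr rfl
  intros; ring

variable {n : ℕ} {f : Fin n → ((Fin 3 → ℂ) →ₗ[ℂ] ℂ)}

lemma finrank_dual3 : finrank ℂ ((Fin 3 → ℂ) →ₗ[ℂ] ℂ) = 3 := by
  rw [Module.finrank_linearMap, Module.finrank_fin_fun, Module.finrank_self]

lemma ker3 (hf : CentralGeneric f) {S : Finset (Fin n)} (hS : S.card = 3)
    {d : Fin n → ℂ} (h : ∑ i ∈ S, d i • f i = 0) : ∀ i ∈ S, d i = 0 := by
  have h2 : ∑ i : S, d (i : Fin n) • f (i : Fin n) = 0 := by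
    rw [Finset.sum_coe_sort S (fun i => d i • f i)]; exact h
  have h1 := (Fintype.linearIndependent_iff.mp (hf S hS)) (fun i => d i) h2
  intro i hi; exact h1 ⟨i, hi⟩

lemma triv3 (hf : CentralGeneric f) {S : Finset (Fin n)} (hS : S.card = 3)
    {x : Fin 3 → ℂ} (h : ∀ i ∈ S, f i x = 0) : x = 0 := by
  have hne : Nonempty S := by
    rw [Finset.nonempty_coe_sort]
    exact Finset.card_pos.mp (by omega)
  have hsp : Submodule.span ℂ (Set.range fun i : S => f (i : Fin n)) = ⊤ :=
    (hf S hS).span_eq_top_of_card_eq_finrank (by simp [hS, finrank_dual3])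
  rw [← Module.forall_dual_apply_eq_zero_iff ℂ x]
  intro φ
  have hφ : φ ∈ Submodule.span ℂ (Set.range fun i : S => f (i : Fin n)) := by
    rw [hsp]; trivial
  induction hφ using Submodule.span_induction with
  | mem ψ hψ => obtain ⟨i, rfl⟩ := hψ; exact h i i.2
  | zero => rfl
  | add ψ χ _ _ h1 h2 => simp [h1, h2]
  | smul c ψ _ h1 => simp [h1]

lemma exists_third {p q : Fin n} (hn : 6 ≤ n) : ∃ r : Fin n, r ≠ p ∧ r ≠ q := by
  by_contra hcon
  push_neg at hcon
  have hsub : (Finset.univ : Finset (Fin n)) ⊆ {p, q} := by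
    intro r _
    rcases em (r = p) with h | h
    · simp [h]
    · simp [hcon r h]
  have := Finset.card_le_card hsub
  have h2 : ({p, q} : Finset (Fin n)).card ≤ 2 := Finset.card_insert_le _ _ |>.trans (by simp)
  simp [Finset.card_univ] at this
  omega

lemma surj3 (hf : CentralGeneric f) {S : Finset (Fin n)} (hS : S.card = 3)
    (t : Fin n → ℂ) : ∃ x : Fin 3 → ℂ, ∀ i ∈ S, f i x = t i := by
  classical
  obtain ⟨p, q, r, hpq, hpr, hqr, rfl⟩ := Finset.card_eq_three.mp hS
  set g : (Fin 3 → ℂ) →ₗ[ℂ] (Fin 3 → ℂ) := LinearMap.pi ![f p, f q, f r] with hg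
  have hker : ∀ x, g x = 0 → x = 0 := by
    intro x hx
    refine triv3 hf hS ?_
    intro i hi
    simp only [Finset.mem_insert, Finset.mem_singleton] at hi
    rcases hi with rfl | rfl | rfl
    · have := congrFun hx 0; simpa [hg, LinearMap.pi_apply] using this
    · have := congrFun hx 1; simpa [hg, LinearMap.pi_apply] using this
    · have := congrFun hx 2; simpa [hg, LinearMap.pi_apply] using this
  have hinj : Function.Injective g := by
    rw [← LinearMap.ker_eq_bot]
    exact LinearMap.ker_eq_bot'.mpr hker
  have hsurj := LinearMap.injective_iff_surjective.mp hinj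
  obtain ⟨x, hx⟩ := hsurj ![t p, t q, t r]
  refine ⟨x, ?_⟩
  intro i hi
  simp only [Finset.mem_insert, Finset.mem_singleton] at hi
  rcases hi with rfl | rfl | rfl
  · have := congrFun hx 0; simpa [hg, LinearMap.pi_apply] using this
  · have := congrFun hx 1; simpa [hg, LinearMap.pi_apply] using this
  · have := congrFun hx 2; simpa [hg, LinearMap.pi_apply] using this

lemma pair_indep (hn : 6 ≤ n) (hf : CentralGeneric f) {p q : Fin n} (hpq : p ≠ q)
    {x y : ℂ} (h : x • f p + y • f q = 0) : x = 0 ∧ y = 0 := by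
  classical
  obtain ⟨r, hrp, hrq⟩ := exists_third (p := p) (q := q) hn
  have hS : ({p, q, r} : Finset (Fin n)).card = 3 := by
    rw [Finset.card_insert_of_notMem (by simp [hpq, hrp.symm]),
      Finset.card_insert_of_notMem (by simp [hrq.symm]), Finset.card_singleton]
  set d : Fin n → ℂ := fun i => if i = p then x else if i = q then y else 0 with hd
  have hsum : ∑ i ∈ ({p, q, r} : Finset (Fin n)), d i • f i = 0 := by
    rw [Finset.sum_insert (by simp [hpq, hrp.symm]),
      Finset.sum_insert (by simp [hrq.symm]), Finset.sum_singleton]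
    simp only [hd, if_pos rfl, if_neg hpq.symm, if_neg hrp, if_neg hrq]
    simpa using h
  have := ker3 hf hS hsum
  constructor
  · have := this p (by simp); simpa [hd] using this
  · have := this q (by simp); simpa [hd, hpq.symm] using this

lemma f_ne_zero (hn : 6 ≤ n) (hf : CentralGeneric f) (p : Fin n) : f p ≠ 0 := by
  intro h
  obtain ⟨r, hrp, _⟩ := exists_third (p := p) (q := p) hn
  have h2 : (1 : ℂ) • f p + (0 : ℂ) • f r = 0 := by simp [h]
  have := (pair_indep hn hf (Ne.symm hrp) h2).1
  simp at this

lemma dual_pair (hn : 6 ≤ n) (hf : CentralGeneric f) {p q : Fin n} (hpq : p ≠ q) :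
    ∃ u v : Fin 3 → ℂ, f p u = 1 ∧ f q u = 0 ∧ f p v = 0 ∧ f q v = 1 := by
  classical
  obtain ⟨r, hrp, hrq⟩ := exists_third (p := p) (q := q) hn
  have hS : ({p, q, r} : Finset (Fin n)).card = 3 := by
    rw [Finset.card_insert_of_notMem (by simp [hpq, hrp.symm]),
      Finset.card_insert_of_notMem (by simp [hrq.symm]), Finset.card_singleton]
  obtain ⟨u, hu⟩ := surj3 hf hS (fun i => if i = p then 1 else 0)
  obtain ⟨v, hv⟩ := surj3 hf hS (fun i => if i = q then 1 else 0)
  refine ⟨u, v, ?_, ?_, ?_, ?_⟩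
  · simpa using hu p (by simp)
  · simpa [hpq.symm] using hu q (by simp)
  · simpa [hpq] using hv p (by simp)
  · simpa using hv q (by simp)

lemma rel_exists (hf : CentralGeneric f) {L : Finset (Fin n)} (hL : L.card = 4) :
    ∃ a : Fin n → ℂ, (∀ i ∉ L, a i = 0) ∧ (∀ i ∈ L, a i ≠ 0) ∧ ∑ i ∈ L, a i • f i = 0 := by
  classical
  have hni : ¬ LinearIndependent ℂ (fun i : L => f (i : Fin n)) := by
    intro h
    have := h.fintype_card_le_finrank
    rw [finrank_dual3] at this
    simp [hL] at this
  obtain ⟨g, hg, i0, hi0⟩ := Fintype.not_linearIndependent_iff.mp hni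
  set a : Fin n → ℂ := fun i => if h : i ∈ L then g ⟨i, h⟩ else 0 with ha
  have hsum : ∑ i ∈ L, a i • f i = 0 := by
    rw [← Finset.sum_coe_sort L (fun i => a i • f i)]
    rw [← hg]
    apply Finset.sum_congr rfl
    intro i _
    simp [ha, i.2]
  have hfull : ∀ p ∈ L, a p ≠ 0 := by
    intro p hp hap
    have h3 : (L.erase p).card = 3 := by rw [Finset.card_erase_of_mem hp, hL]
    have hsum' : ∑ i ∈ L.erase p, a i • f i = 0 := by
      rw [Finset.sum_erase _ (by rw [hap, zero_smul])]
      exact hsum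
    have hz := ker3 hf h3 hsum'
    apply hi0
    have hmem : (i0 : Fin n) ∈ L := i0.2
    have : a (i0 : Fin n) = g i0 := by simp [ha, hmem]
    rw [← this]
    by_cases hip : (i0 : Fin n) = p
    · rw [hip]; exact hap
    · exact hz _ (Finset.mem_erase.mpr ⟨hip, hmem⟩)
  exact ⟨a, fun i hi => by simp [ha, hi], hfull, hsum⟩

lemma rel_unique (hf : CentralGeneric f) {L : Finset (Fin n)} (hL : L.card = 4)
    {a : Fin n → ℂ} (ha0 : ∀ i ∈ L, a i ≠ 0) (ha : ∑ i ∈ L, a i • f i = 0)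
    {d : Fin n → ℂ} (hd : ∑ i ∈ L, d i • f i = 0) {p : Fin n} (hp : p ∈ L) :
    ∀ i ∈ L, d i = (d p / a p) * a i := by
  classical
  set μ := d p / a p with hμ
  set e : Fin n → ℂ := fun i => d i - μ * a i with he
  have hap : a p ≠ 0 := ha0 p hp
  have hep : e p = 0 := by
    simp only [he, hμ]
    field_simp
    ring
  have hesum : ∑ i ∈ L, e i • f i = 0 := by
    have h1 : ∀ i, e i • f i = d i • f i - μ • (a i • f i) := by
      intro i; simp [he, sub_smul, smul_smul]
    simp only [h1]
    rw [Finset.sum_sub_distrib, ← Finset.smul_sum, ha, hd, smul_zero, sub_zero]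
  have h3 : (L.erase p).card = 3 := by rw [Finset.card_erase_of_mem hp, hL]
  have hsum' : ∑ i ∈ L.erase p, e i • f i = 0 := by
    rw [Finset.sum_erase _ (by rw [hep, zero_smul])]
    exact hesum
  have hz := ker3 hf h3 hsum'
  intro i hi
  by_cases hip : i = p
  · rw [hip]; exact (div_mul_cancel₀ (d p) hap).symm
  · have := hz i (Finset.mem_erase.mpr ⟨hip, hi⟩)
    have h2 : d i - μ * a i = 0 := this
    exact sub_eq_zero.mp h2

lemma D_char (hf : CentralGeneric f) {L : Finset (Fin n)} (hL : L.card = 4)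
    {a : Fin n → ℂ} (ha0 : ∀ i ∈ L, a i ≠ 0) (ha : ∑ i ∈ L, a i • f i = 0) :
    D f L = {t | ∑ i ∈ L, a i * t i = 0} := by
  classical
  ext t
  constructor
  · rintro ⟨x, hx⟩
    show ∑ i ∈ L, a i * t i = 0
    have h1 : ∑ i ∈ L, a i * t i = ∑ i ∈ L, a i * f i x :=
      Finset.sum_congr rfl (fun i hi => by rw [hx i hi])
    have h2 : ∑ i ∈ L, a i * f i x = (∑ i ∈ L, a i • f i) x := by
      rw [LinearMap.sum_apply]
      exact Finset.sum_congr rfl (fun i _ => by simp)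
    rw [h1, h2, ha]
    rfl
  · intro ht
    have ht : ∑ i ∈ L, a i * t i = 0 := ht
    have hLne : L.Nonempty := Finset.card_pos.mp (by omega)
    obtain ⟨p, hp⟩ := hLne
    have h3 : (L.erase p).card = 3 := by rw [Finset.card_erase_of_mem hp, hL]
    obtain ⟨x, hx⟩ := surj3 hf h3 t
    refine ⟨x, ?_⟩
    intro i hi
    by_cases hip : i = p
    · subst hip
      have h1 : ∑ j ∈ L, a j * f j x = 0 := by
        have h2 : ∑ j ∈ L, a j * f j x = (∑ j ∈ L, a j • f j) x := by
          rw [LinearMap.sum_apply]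
          exact Finset.sum_congr rfl (fun j _ => by simp)
        rw [h2, ha]; rfl
      rw [← Finset.add_sum_erase _ _ hp] at h1 ht
      have h4 : ∑ j ∈ L.erase i, a j * f j x = ∑ j ∈ L.erase i, a j * t j :=
        Finset.sum_congr rfl (fun j hj => by rw [hx j hj])
      rw [h4] at h1
      have h5 : a i * f i x = a i * t i := by linear_combination h1 - ht
      have := ha0 i hp
      field_simp at h5
      tauto
    · exact hx i (Finset.mem_erase.mpr ⟨hip, hi⟩)

lemma finrank_ker_eq_two {g : (Fin 3 → ℂ) →ₗ[ℂ] ℂ} (hg : g ≠ 0) :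
    finrank ℂ (LinearMap.ker g) = 2 := by
  have hex : ∃ x, g x ≠ 0 := by
    by_contra h
    push_neg at h
    exact hg (LinearMap.ext fun x => by simp [h x])
  obtain ⟨x, hx⟩ := hex
  have hsurj : Function.Surjective g := by
    intro y
    exact ⟨(y * (g x)⁻¹) • x, by simp [map_smul]; field_simp⟩
  have h := LinearMap.finrank_range_add_finrank_ker g
  rw [LinearMap.range_eq_top.mpr hsurj, finrank_top, Module.finrank_self,
    Module.finrank_fin_fun] at h
  omega

lemma ker_sup_ker_eq_top {A B : (Fin 3 → ℂ) →ₗ[ℂ] ℂ} {u v : Fin 3 → ℂ}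
    (hAu : A u = 1) (hBu : B u = 0) (hAv : A v = 0) (hBv : B v = 1) :
    LinearMap.ker A ⊔ LinearMap.ker B = ⊤ := by
  rw [eq_top_iff]
  rintro x -
  have hx : x = (x - A x • u - B x • v + B x • v) + A x • u := by abel
  rw [hx]
  apply Submodule.add_mem_sup
  · rw [LinearMap.mem_ker]
    simp [hAu, hAv, mul_comm]
  · rw [LinearMap.mem_ker]
    simp [hBu]

lemma finrank_ker_inf {A B : (Fin 3 → ℂ) →ₗ[ℂ] ℂ} {u v : Fin 3 → ℂ}
    (hAu : A u = 1) (hBu : B u = 0) (hAv : A v = 0) (hBv : B v = 1) :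
    finrank ℂ (LinearMap.ker A ⊓ LinearMap.ker B : Submodule ℂ (Fin 3 → ℂ)) = 1 := by
  have hA : A ≠ 0 := by intro h; rw [h] at hAu; simp at hAu
  have hB : B ≠ 0 := by intro h; rw [h] at hBv; simp at hBv
  have h := Submodule.finrank_sup_add_finrank_inf_eq (LinearMap.ker A) (LinearMap.ker B)
  rw [ker_sup_ker_eq_top hAu hBu hAv hBv, finrank_top, Module.finrank_fin_fun,
    finrank_ker_eq_two hA, finrank_ker_eq_two hB] at h
  omega

lemma span2 {A B C : (Fin 3 → ℂ) →ₗ[ℂ] ℂ} {u v : Fin 3 → ℂ}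
    (hAu : A u = 1) (hBu : B u = 0) (hAv : A v = 0) (hBv : B v = 1)
    (h : ∀ x, A x = 0 → B x = 0 → C x = 0) : C = C u • A + C v • B := by
  apply LinearMap.ext; intro x
  have h1 : A (x - A x • u - B x • v) = 0 := by
    simp [map_sub, map_smul, hAu, hAv, smul_eq_mul]
  have h2 : B (x - A x • u - B x • v) = 0 := by
    simp [map_sub, map_smul, hBu, hBv, smul_eq_mul]
  have h3 := h _ h1 h2
  simp only [map_sub, map_smul, smul_eq_mul] at h3
  simp only [LinearMap.add_apply, LinearMap.smul_apply, smul_eq_mul]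
  linear_combination h3

end ThreeDepAux

open ThreeDepAux

theorem dependent_iff_three_dependent {n : ℕ} (hn : 6 ≤ n)
    (f : Fin n → ((Fin 3 → ℂ) →ₗ[ℂ] ℂ)) (hf : CentralGeneric f)
    (L : Fin 3 → Finset (Fin n)) (hcard : ∀ i, (L i).card = 4)
    (hint : ∀ i j, i ≠ j → (L i ∩ L j).card = 2)
    (hunion : (L 0 ∪ L 1 ∪ L 2).card = 6) :
    Module.finrank ℂ (Hij f L 0 1 ⊔ Hij f L 0 2 ⊔ Hij f L 1 2 :
        Submodule ℂ (Fin 3 → ℂ)) = 2 ↔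
      D f (L 0) ∩ D f (L 1) ⊆ D f (L 2) := by
  classical
  have h01 := hint 0 1 (by decide)
  have h02 := hint 0 2 (by decide)
  have h12 := hint 1 2 (by decide)
  -- the triple intersection is empty
  have hP : ((L 0 ∩ L 2) ∩ (L 1 ∩ L 2)) = ∅ := by
    have e1 := Finset.card_union_add_card_inter (L 0) (L 1)
    have e2 := Finset.card_union_add_card_inter (L 0 ∪ L 1) (L 2)
    have e3 := Finset.card_union_add_card_inter (L 0 ∩ L 2) (L 1 ∩ L 2)
    rw [Finset.union_inter_distrib_right] at e2
    apply Finset.card_eq_zero.mp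
    rw [hcard 0, hcard 1, h01] at e1
    rw [hunion, hcard 2] at e2
    rw [h02, h12] at e3
    omega
  have hkey : ∀ x, x ∈ L 0 → x ∈ L 1 → x ∈ L 2 → False := by
    intro x h0 h1 h2
    have hx : x ∈ (L 0 ∩ L 2) ∩ (L 1 ∩ L 2) := by
      simp [Finset.mem_inter, h0, h1, h2]
    rw [hP] at hx
    simp at hx
  obtain ⟨p1, q1, hne1, hP01⟩ := Finset.card_eq_two.mp h01
  obtain ⟨p2, q2, hne2, hP02⟩ := Finset.card_eq_two.mp h02
  obtain ⟨p3, q3, hne3, hP12⟩ := Finset.card_eq_two.mp h12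
  have hp1m : p1 ∈ L 0 ∩ L 1 := by rw [hP01]; simp
  have hq1m : q1 ∈ L 0 ∩ L 1 := by rw [hP01]; simp
  have hp2m : p2 ∈ L 0 ∩ L 2 := by rw [hP02]; simp
  have hq2m : q2 ∈ L 0 ∩ L 2 := by rw [hP02]; simp
  have hp3m : p3 ∈ L 1 ∩ L 2 := by rw [hP12]; simp
  have hq3m : q3 ∈ L 1 ∩ L 2 := by rw [hP12]; simp
  have hp1L0 := (Finset.mem_inter.mp hp1m).1
  have hp1L1 := (Finset.mem_inter.mp hp1m).2
  have hq1L0 := (Finset.mem_inter.mp hq1m).1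
  have hq1L1 := (Finset.mem_inter.mp hq1m).2
  have hp2L0 := (Finset.mem_inter.mp hp2m).1
  have hp2L2 := (Finset.mem_inter.mp hp2m).2
  have hq2L0 := (Finset.mem_inter.mp hq2m).1
  have hq2L2 := (Finset.mem_inter.mp hq2m).2
  have hp3L1 := (Finset.mem_inter.mp hp3m).1
  have hp3L2 := (Finset.mem_inter.mp hp3m).2
  have hq3L1 := (Finset.mem_inter.mp hq3m).1
  have hq3L2 := (Finset.mem_inter.mp hq3m).2
  have hp1nL2 : p1 ∉ L 2 := fun h => hkey p1 hp1L0 hp1L1 h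
  have hq1nL2 : q1 ∉ L 2 := fun h => hkey q1 hq1L0 hq1L1 h
  have hp2nL1 : p2 ∉ L 1 := fun h => hkey p2 hp2L0 h hp2L2
  have hq2nL1 : q2 ∉ L 1 := fun h => hkey q2 hq2L0 h hq2L2
  have hp3nL0 : p3 ∉ L 0 := fun h => hkey p3 h hp3L1 hp3L2
  have hq3nL0 : q3 ∉ L 0 := fun h => hkey q3 h hq3L1 hq3L2
  have hp1p2 : p1 ≠ p2 := by intro h; rw [h] at hp1nL2; exact hp1nL2 hp2L2
  have hp1q2 : p1 ≠ q2 := by intro h; rw [h] at hp1nL2; exact hp1nL2 hq2L2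
  have hp1p3 : p1 ≠ p3 := by intro h; rw [h] at hp1nL2; exact hp1nL2 hp3L2
  have hp1q3 : p1 ≠ q3 := by intro h; rw [h] at hp1nL2; exact hp1nL2 hq3L2
  have hq1p2 : q1 ≠ p2 := by intro h; rw [h] at hq1nL2; exact hq1nL2 hp2L2
  have hq1q2 : q1 ≠ q2 := by intro h; rw [h] at hq1nL2; exact hq1nL2 hq2L2
  have hq1p3 : q1 ≠ p3 := by intro h; rw [h] at hq1nL2; exact hq1nL2 hp3L2
  have hq1q3 : q1 ≠ q3 := by intro h; rw [h] at hq1nL2; exact hq1nL2 hq3L2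
  have hp2p3 : p2 ≠ p3 := by intro h; rw [h] at hp2nL1; exact hp2nL1 hp3L1
  have hp2q3 : p2 ≠ q3 := by intro h; rw [h] at hp2nL1; exact hp2nL1 hq3L1
  have hq2p3 : q2 ≠ p3 := by intro h; rw [h] at hq2nL1; exact hq2nL1 hp3L1
  have hq2q3 : q2 ≠ q3 := by intro h; rw [h] at hq2nL1; exact hq2nL1 hq3L1
  -- the explicit description of the parts
  have hL0 : L 0 = {p1, q1, p2, q2} := by
    have hsub : ({p1, q1, p2, q2} : Finset (Fin n)) ⊆ L 0 := by
      intro x hx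
      simp only [Finset.mem_insert, Finset.mem_singleton] at hx
      rcases hx with rfl | rfl | rfl | rfl <;> assumption
    have hcard4 : ({p1, q1, p2, q2} : Finset (Fin n)).card = 4 := by
      rw [Finset.card_insert_of_notMem (by simp [hne1, hp1p2, hp1q2]),
        Finset.card_insert_of_notMem (by simp [hq1p2, hq1q2]),
        Finset.card_insert_of_notMem (by simp [hne2]), Finset.card_singleton]
    exact (Finset.eq_of_subset_of_card_le hsub (by simp [hcard 0, hcard4])).symm
  have hL1 : L 1 = {p1, q1, p3, q3} := by
    have hsub : ({p1, q1, p3, q3} : Finset (Fin n)) ⊆ L 1 := by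
      intro x hx
      simp only [Finset.mem_insert, Finset.mem_singleton] at hx
      rcases hx with rfl | rfl | rfl | rfl <;> assumption
    have hcard4 : ({p1, q1, p3, q3} : Finset (Fin n)).card = 4 := by
      rw [Finset.card_insert_of_notMem (by simp [hne1, hp1p3, hp1q3]),
        Finset.card_insert_of_notMem (by simp [hq1p3, hq1q3]),
        Finset.card_insert_of_notMem (by simp [hne3]), Finset.card_singleton]
    exact (Finset.eq_of_subset_of_card_le hsub (by simp [hcard 1, hcard4])).symm
  have hL2 : L 2 = {p2, q2, p3, q3} := by
    have hsub : ({p2, q2, p3, q3} : Finset (Fin n)) ⊆ L 2 := by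
      intro x hx
      simp only [Finset.mem_insert, Finset.mem_singleton] at hx
      rcases hx with rfl | rfl | rfl | rfl <;> assumption
    have hcard4 : ({p2, q2, p3, q3} : Finset (Fin n)).card = 4 := by
      rw [Finset.card_insert_of_notMem (by simp [hne2, hp2p3, hp2q3]),
        Finset.card_insert_of_notMem (by simp [hq2p3, hq2q3]),
        Finset.card_insert_of_notMem (by simp [hne3]), Finset.card_singleton]
    exact (Finset.eq_of_subset_of_card_le hsub (by simp [hcard 2, hcard4])).symm
  -- relations among the functionals
  obtain ⟨a, haS, haN, haR⟩ := rel_exists hf (hcard 0)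
  obtain ⟨b, hbS, hbN, hbR⟩ := rel_exists hf (hcard 1)
  obtain ⟨c, hcS, hcN, hcR⟩ := rel_exists hf (hcard 2)
  have hap3 : a p3 = 0 := haS p3 hp3nL0
  have haq3 : a q3 = 0 := haS q3 hq3nL0
  have hbp2 : b p2 = 0 := hbS p2 hp2nL1
  have hbq2 : b q2 = 0 := hbS q2 hq2nL1
  have hcp1 : c p1 = 0 := hcS p1 hp1nL2
  have hcq1 : c q1 = 0 := hcS q1 hq1nL2
  -- expanded sums
  have hA : ∀ t : Fin n → ℂ, ∑ i ∈ L 0, a i * t i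
      = a p1 * t p1 + a q1 * t q1 + a p2 * t p2 + a q2 * t q2 := by
    intro t; rw [hL0]; exact sum_quad hne1 hp1p2 hp1q2 hq1p2 hq1q2 hne2 _
  have hB : ∀ t : Fin n → ℂ, ∑ i ∈ L 1, b i * t i
      = b p1 * t p1 + b q1 * t q1 + b p3 * t p3 + b q3 * t q3 := by
    intro t; rw [hL1]; exact sum_quad hne1 hp1p3 hp1q3 hq1p3 hq1q3 hne3 _
  have hC : ∀ t : Fin n → ℂ, ∑ i ∈ L 2, c i * t i
      = c p2 * t p2 + c q2 * t q2 + c p3 * t p3 + c q3 * t q3 := by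
    intro t; rw [hL2]; exact sum_quad hne2 hp2p3 hp2q3 hq2p3 hq2q3 hne3 _
  have haR' : a p1 • f p1 + a q1 • f q1 + a p2 • f p2 + a q2 • f q2 = 0 := by
    rw [← sum_quad hne1 hp1p2 hp1q2 hq1p2 hq1q2 hne2 (fun i => a i • f i), ← hL0]
    exact haR
  have hcR' : c p2 • f p2 + c q2 • f q2 + c p3 • f p3 + c q3 • f q3 = 0 := by
    rw [← sum_quad hne2 hp2p3 hp2q3 hq2p3 hq2q3 hne3 (fun i => c i • f i), ← hL2]
    exact hcR
  -- the D-sets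
  have hD0 : D f (L 0) = {t | ∑ i ∈ L 0, a i * t i = 0} := D_char hf (hcard 0) haN haR
  have hD1 : D f (L 1) = {t | ∑ i ∈ L 1, b i * t i = 0} := D_char hf (hcard 1) hbN hbR
  have hD2 : D f (L 2) = {t | ∑ i ∈ L 2, c i * t i = 0} := D_char hf (hcard 2) hcN hcR
  -- the H-subspaces
  have hH01 : Hij f L 0 1 = LinearMap.ker (f p1) ⊓ LinearMap.ker (f q1) := by
    show (⨅ p ∈ L 0 ∩ L 1, LinearMap.ker (f p)) = _
    rw [hP01]
    ext x
    simp only [Submodule.mem_iInf, Finset.mem_insert, Finset.mem_singleton,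
      Submodule.mem_inf, LinearMap.mem_ker]
    constructor
    · intro h; exact ⟨h p1 (Or.inl rfl), h q1 (Or.inr rfl)⟩
    · rintro ⟨h1, h2⟩ p (rfl | rfl) <;> assumption
  have hH02 : Hij f L 0 2 = LinearMap.ker (f p2) ⊓ LinearMap.ker (f q2) := by
    show (⨅ p ∈ L 0 ∩ L 2, LinearMap.ker (f p)) = _
    rw [hP02]
    ext x
    simp only [Submodule.mem_iInf, Finset.mem_insert, Finset.mem_singleton,
      Submodule.mem_inf, LinearMap.mem_ker]
    constructor
    · intro h; exact ⟨h p2 (Or.inl rfl), h q2 (Or.inr rfl)⟩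
    · rintro ⟨h1, h2⟩ p (rfl | rfl) <;> assumption
  have hH12 : Hij f L 1 2 = LinearMap.ker (f p3) ⊓ LinearMap.ker (f q3) := by
    show (⨅ p ∈ L 1 ∩ L 2, LinearMap.ker (f p)) = _
    rw [hP12]
    ext x
    simp only [Submodule.mem_iInf, Finset.mem_insert, Finset.mem_singleton,
      Submodule.mem_inf, LinearMap.mem_ker]
    constructor
    · intro h; exact ⟨h p3 (Or.inl rfl), h q3 (Or.inr rfl)⟩
    · rintro ⟨h1, h2⟩ p (rfl | rfl) <;> assumption
  -- dual pairs
  obtain ⟨u1, v1, hu1p, hu1q, hv1p, hv1q⟩ := dual_pair hn hf hne1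
  obtain ⟨u2, v2, hu2p, hu2q, hv2p, hv2q⟩ := dual_pair hn hf hne2
  obtain ⟨u3, v3, hu3p, hu3q, hv3p, hv3q⟩ := dual_pair hn hf hne3
  -- generators of the lines
  have hr01 : finrank ℂ (LinearMap.ker (f p1) ⊓ LinearMap.ker (f q1) :
      Submodule ℂ (Fin 3 → ℂ)) = 1 := finrank_ker_inf hu1p hu1q hv1p hv1q
  have hr02 : finrank ℂ (LinearMap.ker (f p2) ⊓ LinearMap.ker (f q2) :
      Submodule ℂ (Fin 3 → ℂ)) = 1 := finrank_ker_inf hu2p hu2q hv2p hv2q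
  have hr12 : finrank ℂ (LinearMap.ker (f p3) ⊓ LinearMap.ker (f q3) :
      Submodule ℂ (Fin 3 → ℂ)) = 1 := finrank_ker_inf hu3p hu3q hv3p hv3q
  have hwex : ∀ (P : Submodule ℂ (Fin 3 → ℂ)), finrank ℂ P = 1 →
      ∃ w, w ∈ P ∧ w ≠ 0 ∧ Submodule.span ℂ {w} = P := by
    intro P hP1
    have hne : P ≠ ⊥ := by
      intro h; rw [h, finrank_bot] at hP1; omega
    obtain ⟨w, hwP, hwne⟩ := (Submodule.ne_bot_iff _).mp hne
    refine ⟨w, hwP, hwne, ?_⟩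
    apply Submodule.eq_of_le_of_finrank_le
    · rw [Submodule.span_le]; simpa using hwP
    · rw [hP1, finrank_span_singleton hwne]
  obtain ⟨w01, hw01m, hw01ne, hs01⟩ := hwex _ hr01
  obtain ⟨w02, hw02m, hw02ne, hs02⟩ := hwex _ hr02
  obtain ⟨w12, hw12m, hw12ne, hs12⟩ := hwex _ hr12
  have hk01a : f p1 w01 = 0 := (Submodule.mem_inf.mp hw01m).1
  have hk01b : f q1 w01 = 0 := (Submodule.mem_inf.mp hw01m).2
  have hk02a : f p2 w02 = 0 := (Submodule.mem_inf.mp hw02m).1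
  have hk02b : f q2 w02 = 0 := (Submodule.mem_inf.mp hw02m).2
  have hk12a : f p3 w12 = 0 := (Submodule.mem_inf.mp hw12m).1
  have hk12b : f q3 w12 = 0 := (Submodule.mem_inf.mp hw12m).2
  -- reduction of the rank condition
  have hsup : (Hij f L 0 1 ⊔ Hij f L 0 2 ⊔ Hij f L 1 2 : Submodule ℂ (Fin 3 → ℂ))
      = (Submodule.span ℂ {w01} ⊔ Submodule.span ℂ {w02}) ⊔ Submodule.span ℂ {w12} := by
    rw [hH01, hH02, hH12, hs01, hs02, hs12]
  have hbot2 : (Submodule.span ℂ {w01} ⊓ Submodule.span ℂ {w02} :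
      Submodule ℂ (Fin 3 → ℂ)) = ⊥ := by
    rw [hs01, hs02, eq_bot_iff]
    intro x hx
    simp only [Submodule.mem_inf, LinearMap.mem_ker] at hx
    have hS3 : ({p1, q1, p2} : Finset (Fin n)).card = 3 := by
      rw [Finset.card_insert_of_notMem (by simp [hne1, hp1p2]),
        Finset.card_insert_of_notMem (by simp [hq1p2]), Finset.card_singleton]
    have hx0 : x = 0 := by
      refine triv3 hf hS3 ?_
      intro i hi
      simp only [Finset.mem_insert, Finset.mem_singleton] at hi
      rcases hi with rfl | rfl | rfl
      · exact hx.1.1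
      · exact hx.1.2
      · exact hx.2.1
    simp [hx0]
  have hrk2 : finrank ℂ (Submodule.span ℂ {w01} ⊔ Submodule.span ℂ {w02} :
      Submodule ℂ (Fin 3 → ℂ)) = 2 := by
    have h := Submodule.finrank_sup_add_finrank_inf_eq
      (Submodule.span ℂ {w01}) (Submodule.span ℂ {w02})
    rw [hbot2, finrank_bot, finrank_span_singleton hw01ne,
      finrank_span_singleton hw02ne] at h
    omega
  have hiff1 : Module.finrank ℂ (Hij f L 0 1 ⊔ Hij f L 0 2 ⊔ Hij f L 1 2 :
      Submodule ℂ (Fin 3 → ℂ)) = 2 ↔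
      w12 ∈ (Submodule.span ℂ {w01} ⊔ Submodule.span ℂ {w02} :
        Submodule ℂ (Fin 3 → ℂ)) := by
    rw [hsup]
    constructor
    · intro h
      have hle : (Submodule.span ℂ {w01} ⊔ Submodule.span ℂ {w02} :
          Submodule ℂ (Fin 3 → ℂ)) ≤ _ ⊔ Submodule.span ℂ {w12} := le_sup_left
      have heq := Submodule.eq_of_le_of_finrank_le hle (by rw [h, hrk2])
      rw [heq]
      exact Submodule.mem_sup_right (Submodule.mem_span_singleton_self w12)
    · intro h
      have heq : (Submodule.span ℂ {w01} ⊔ Submodule.span ℂ {w02} :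
          Submodule ℂ (Fin 3 → ℂ)) ⊔ Submodule.span ℂ {w12}
          = Submodule.span ℂ {w01} ⊔ Submodule.span ℂ {w02} :=
        sup_eq_left.mpr (by rw [Submodule.span_le]; simpa using h)
      rw [heq, hrk2]
  have hiff2 : w12 ∈ (Submodule.span ℂ {w01} ⊔ Submodule.span ℂ {w02} :
      Submodule ℂ (Fin 3 → ℂ)) ↔ ∃ s t : ℂ, s • w01 + t • w02 = w12 := by
    rw [← Submodule.span_union, Set.singleton_union]
    exact Submodule.mem_span_pair
  -- the common annihilating functional
  set g : (Fin 3 → ℂ) →ₗ[ℂ] ℂ := a p1 • f p1 + a q1 • f q1 with hgdef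
  have hg_w01 : g w01 = 0 := by
    rw [hgdef]
    simp [LinearMap.add_apply, LinearMap.smul_apply, hk01a, hk01b]
  have hgneg : a p2 • f p2 + a q2 • f q2 = -g := by
    have h : g + (a p2 • f p2 + a q2 • f q2) = 0 := by
      rw [← add_assoc]; exact haR'
    exact eq_neg_of_add_eq_zero_right h
  have hg_w02 : g w02 = 0 := by
    have h := LinearMap.congr_fun hgneg w02
    simp only [LinearMap.add_apply, LinearMap.smul_apply, LinearMap.neg_apply,
      smul_eq_mul, hk02a, hk02b, mul_zero, add_zero] at h
    exact neg_eq_zero.mp h.symm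
  -- Bridge A : coplanarity is equivalent to the coefficient relation
  have bridgeA : (∃ s t : ℂ, s • w01 + t • w02 = w12) ↔
      (∃ α β : ℂ, ∀ i, c i = α * a i + β * b i) := by
    constructor
    · rintro ⟨s, t, hw⟩
      have hg_w12 : g w12 = 0 := by
        rw [← hw, map_add, map_smul, map_smul, hg_w01, hg_w02]; simp
      have hker12 : ∀ x : Fin 3 → ℂ, f p3 x = 0 → f q3 x = 0 → g x = 0 := by
        intro x hx1 hx2
        have hx : x ∈ (LinearMap.ker (f p3) ⊓ LinearMap.ker (f q3) :
            Submodule ℂ (Fin 3 → ℂ)) := Submodule.mem_inf.mpr ⟨hx1, hx2⟩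
        rw [← hs12] at hx
        obtain ⟨r, hr⟩ := Submodule.mem_span_singleton.mp hx
        rw [← hr, map_smul, hg_w12, smul_zero]
      have hspan := span2 hu3p hu3q hv3p hv3q hker12
      set x3 := g u3 with hx3
      set y3 := g v3 with hy3
      set e : Fin n → ℂ := fun i => if i = p1 then a p1 else if i = q1 then a q1
        else if i = p3 then -x3 else -y3 with hedef
      have ep1 : e p1 = a p1 := by simp [hedef]
      have eq1 : e q1 = a q1 := by simp [hedef, hne1.symm]
      have ep3 : e p3 = -x3 := by simp [hedef, hp1p3.symm, hq1p3.symm]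
      have eq3 : e q3 = -y3 := by simp [hedef, hp1q3.symm, hq1q3.symm, hne3.symm]
      have hesum : ∑ i ∈ L 1, e i • f i = 0 := by
        rw [hL1, sum_quad hne1 hp1p3 hp1q3 hq1p3 hq1q3 hne3]
        rw [ep1, eq1, ep3, eq3, neg_smul, neg_smul]
        have hkey : a p1 • f p1 + a q1 • f q1 = x3 • f p3 + y3 • f q3 := by
          rw [← hgdef]; exact hspan
        calc a p1 • f p1 + a q1 • f q1 + -(x3 • f p3) + -(y3 • f q3)
            = (a p1 • f p1 + a q1 • f q1) - (x3 • f p3 + y3 • f q3) := by abel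
          _ = 0 := by rw [hkey]; abel
      have hμall := rel_unique hf (hcard 1) hbN hbR hesum hp1L1
      set μ := e p1 / b p1 with hμ
      have f1 : a p1 = μ * b p1 := by rw [← ep1]; exact hμall p1 hp1L1
      have f2 : a q1 = μ * b q1 := by rw [← eq1]; exact hμall q1 hq1L1
      have f3 : -x3 = μ * b p3 := by rw [← ep3]; exact hμall p3 hp3L1
      have f4 : -y3 = μ * b q3 := by rw [← eq3]; exact hμall q3 hq3L1
      set d : Fin n → ℂ := fun i => if i = p2 then a p2 else if i = q2 then a q2
        else if i = p3 then x3 else y3 with hddef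
      have dp2 : d p2 = a p2 := by simp [hddef]
      have dq2 : d q2 = a q2 := by simp [hddef, hne2.symm]
      have dp3 : d p3 = x3 := by simp [hddef, hp2p3.symm, hq2p3.symm]
      have dq3 : d q3 = y3 := by simp [hddef, hp2q3.symm, hq2q3.symm, hne3.symm]
      have hdsum : ∑ i ∈ L 2, d i • f i = 0 := by
        rw [hL2, sum_quad hne2 hp2p3 hp2q3 hq2p3 hq2q3 hne3]
        rw [dp2, dq2, dp3, dq3]
        calc a p2 • f p2 + a q2 • f q2 + x3 • f p3 + y3 • f q3
            = (a p2 • f p2 + a q2 • f q2) + (x3 • f p3 + y3 • f q3) := by abel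
          _ = 0 := by rw [hgneg, ← hspan]; abel
      have hνall := rel_unique hf (hcard 2) hcN hcR hdsum hp2L2
      set ν := d p2 / c p2 with hν
      have g1 : a p2 = ν * c p2 := by rw [← dp2]; exact hνall p2 hp2L2
      have g2 : a q2 = ν * c q2 := by rw [← dq2]; exact hνall q2 hq2L2
      have g3 : x3 = ν * c p3 := by rw [← dp3]; exact hνall p3 hp3L2
      have g4 : y3 = ν * c q3 := by rw [← dq3]; exact hνall q3 hq3L2
      have hνne : ν ≠ 0 := by
        intro h0
        apply haN p2 hp2L0
        rw [g1, h0, zero_mul]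
      have g1' : c p2 = ν⁻¹ * a p2 := by rw [g1]; field_simp
      have g2' : c q2 = ν⁻¹ * a q2 := by rw [g2]; field_simp
      have g3' : c p3 = ν⁻¹ * x3 := by rw [g3]; field_simp
      have g4' : c q3 = ν⁻¹ * y3 := by rw [g4]; field_simp
      refine ⟨ν⁻¹, -(μ * ν⁻¹), ?_⟩
      intro i
      by_cases hi1 : i = p1
      · subst hi1; linear_combination hcp1 - ν⁻¹ * f1
      · by_cases hi2 : i = q1
        · subst hi2; linear_combination hcq1 - ν⁻¹ * f2
        · by_cases hi3 : i = p2
          · subst hi3; linear_combination g1' + μ * ν⁻¹ * hbp2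
          · by_cases hi4 : i = q2
            · subst hi4; linear_combination g2' + μ * ν⁻¹ * hbq2
            · by_cases hi5 : i = p3
              · subst hi5; linear_combination g3' - ν⁻¹ * f3 - ν⁻¹ * hap3
              · by_cases hi6 : i = q3
                · subst hi6; linear_combination g4' - ν⁻¹ * f4 - ν⁻¹ * haq3
                · have hiL0 : i ∉ L 0 := by
                    rw [hL0]; simp [hi1, hi2, hi3, hi4]
                  have hiL1 : i ∉ L 1 := by
                    rw [hL1]; simp [hi1, hi2, hi5, hi6]
                  have hiL2 : i ∉ L 2 := by
                    rw [hL2]; simp [hi3, hi4, hi5, hi6]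
                  rw [haS i hiL0, hbS i hiL1, hcS i hiL2]; ring
    · rintro ⟨α, β, hR⟩
      have hαne : α ≠ 0 := by
        intro h0
        have h1 := hR p2
        rw [h0, hbp2] at h1
        simp at h1
        exact hcN p2 hp2L2 h1
      have hg_w12 : g w12 = 0 := by
        have h1 := LinearMap.congr_fun haR' w12
        simp only [LinearMap.add_apply, LinearMap.smul_apply, LinearMap.zero_apply,
          smul_eq_mul] at h1
        have h2 := LinearMap.congr_fun hcR' w12
        simp only [LinearMap.add_apply, LinearMap.smul_apply, LinearMap.zero_apply,
          smul_eq_mul] at h2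
        rw [hk12a, hk12b] at h2
        have h3 := hR p2
        have h4 := hR q2
        have h7 : α * (a p2 * f p2 w12 + a q2 * f q2 w12) = 0 := by
          linear_combination h2 - f p2 w12 * h3 - f q2 w12 * h4
            - β * f p2 w12 * hbp2 - β * f q2 w12 * hbq2
        have h6 : a p2 * f p2 w12 + a q2 * f q2 w12 = 0 := by
          rcases mul_eq_zero.mp h7 with h | h
          · exact absurd h hαne
          · exact h
        linear_combination h1 - h6
      have hgne : g ≠ 0 := by
        intro h0
        rw [hgdef] at h0
        exact haN p1 hp1L0 (pair_indep hn hf hne1 h0).1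
      have hle : (Submodule.span ℂ {w01} ⊔ Submodule.span ℂ {w02} :
          Submodule ℂ (Fin 3 → ℂ)) ≤ LinearMap.ker g := by
        apply sup_le
        · rw [Submodule.span_le]
          exact Set.singleton_subset_iff.mpr (LinearMap.mem_ker.mpr hg_w01)
        · rw [Submodule.span_le]
          exact Set.singleton_subset_iff.mpr (LinearMap.mem_ker.mpr hg_w02)
      have heq := Submodule.eq_of_le_of_finrank_le hle
        (by rw [finrank_ker_eq_two hgne, hrk2])
      exact hiff2.mp (by rw [heq]; exact LinearMap.mem_ker.mpr hg_w12)
  -- Bridge B : the coefficient relation is equivalent to 3-dependency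
  have bridgeB : (∃ α β : ℂ, ∀ i, c i = α * a i + β * b i) ↔
      (D f (L 0) ∩ D f (L 1) ⊆ D f (L 2)) := by
    constructor
    · rintro ⟨α, β, hR⟩ t ht
      obtain ⟨ht0, ht1⟩ := ht
      rw [hD0] at ht0
      rw [hD1] at ht1
      have ht0' : ∑ i ∈ L 0, a i * t i = 0 := ht0
      have ht1' : ∑ i ∈ L 1, b i * t i = 0 := ht1
      rw [hA] at ht0'
      rw [hB] at ht1'
      rw [hD2]
      show ∑ i ∈ L 2, c i * t i = 0
      rw [hC]
      have hc2 : c p2 = α * a p2 := by rw [hR p2, hbp2]; ring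
      have hc2' : c q2 = α * a q2 := by rw [hR q2, hbq2]; ring
      have hc3 : c p3 = β * b p3 := by rw [hR p3, hap3]; ring
      have hc3' : c q3 = β * b q3 := by rw [hR q3, haq3]; ring
      have hz1 : α * a p1 + β * b p1 = 0 := by rw [← hR p1]; exact hcp1
      have hz1' : α * a q1 + β * b q1 = 0 := by rw [← hR q1]; exact hcq1
      rw [hc2, hc2', hc3, hc3']
      linear_combination α * ht0' + β * ht1' - t p1 * hz1 - t q1 * hz1'
    · intro hsub
      have hap2ne := haN p2 hp2L0
      have hbp3ne := hbN p3 hp3L1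
      set u : Fin n → ℂ := fun i => if i = p2 then (a p2)⁻¹ else 0 with hudef
      set v : Fin n → ℂ := fun i => if i = p3 then (b p3)⁻¹ else 0 with hvdef
      have hAu : ∑ i ∈ L 0, a i * u i = 1 := by
        rw [hA]
        simp [hudef, hp1p2, hq1p2, hne2.symm]
        field_simp
      have hBu : ∑ i ∈ L 1, b i * u i = 0 := by
        rw [hB]
        simp [hudef, hp1p2, hq1p2, hp2p3.symm, hp2q3.symm]
      have hAv : ∑ i ∈ L 0, a i * v i = 0 := by
        rw [hA]
        simp [hvdef, hp1p3, hq1p3, hp2p3, hq2p3]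
      have hBv : ∑ i ∈ L 1, b i * v i = 1 := by
        rw [hB]
        simp [hvdef, hp1p3, hq1p3, hne3.symm]
        field_simp
      set α := ∑ i ∈ L 2, c i * u i with hα
      set β := ∑ i ∈ L 2, c i * v i with hβ
      have hmain : ∀ t : Fin n → ℂ, ∑ i ∈ L 2, c i * t i
          = (∑ i ∈ L 0, a i * t i) * α + (∑ i ∈ L 1, b i * t i) * β := by
        intro t
        set s := ∑ i ∈ L 0, a i * t i with hs
        set r := ∑ i ∈ L 1, b i * t i with hr
        set t' : Fin n → ℂ := fun i => t i - s * u i - r * v i with ht'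
        have h0 : ∑ i ∈ L 0, a i * t' i = 0 := by
          show ∑ i ∈ L 0, a i * (t i - s * u i - r * v i) = 0
          rw [sum_lin a (L 0) t u v s r, hAu, hAv, ← hs]; ring
        have h1 : ∑ i ∈ L 1, b i * t' i = 0 := by
          show ∑ i ∈ L 1, b i * (t i - s * u i - r * v i) = 0
          rw [sum_lin b (L 1) t u v s r, hBu, hBv, ← hr]; ring
        have ht'mem : t' ∈ D f (L 0) ∩ D f (L 1) := by
          constructor
          · rw [hD0]; exact h0
          · rw [hD1]; exact h1
        have h2' := hsub ht'mem
        rw [hD2] at h2'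
        have h2 : ∑ i ∈ L 2, c i * t' i = 0 := h2'
        have h3 : ∑ i ∈ L 2, c i * t' i
            = (∑ i ∈ L 2, c i * t i) - s * α - r * β := by
          show ∑ i ∈ L 2, c i * (t i - s * u i - r * v i) = _
          rw [sum_lin c (L 2) t u v s r, ← hα, ← hβ]
        rw [h3] at h2
        linear_combination h2
      refine ⟨α, β, ?_⟩
      intro i
      have hdelta : ∀ (S : Finset (Fin n)) (e : Fin n → ℂ), (∀ j ∉ S, e j = 0) →
          ∑ j ∈ S, e j * (if j = i then 1 else 0) = e i := by
        intro S e heS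
        have hcong : ∀ j ∈ S, e j * (if j = i then 1 else 0)
            = if j = i then e j else 0 := by
          intro j _; split <;> ring
        rw [Finset.sum_congr rfl hcong, Finset.sum_ite_eq' S i e]
        by_cases hiS : i ∈ S
        · simp [hiS]
        · simp [hiS, heS i hiS]
      have h4 := hmain (fun j => if j = i then 1 else 0)
      rw [hdelta (L 2) c hcS, hdelta (L 0) a haS, hdelta (L 1) b hbS] at h4
      rw [h4]; ring
  exact (hiff1.trans (hiff2.trans bridgeA)).trans bridgeB
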